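/- Let a ≥ 1, b ≥ 0 be integers with a + b ≥ 1, and let f = (f_1,f_2): C^2 → C^2 satisfy f_1(z,w) = z + z^{a+1}w^b·(c + ε_1(z,w)) and f_2(z,w) = w + z^a w^{b+1}·(d + ε_2(z,w)) with c, d nonzero and ε_i(0,0) = 0. Setting u = z^a w^b, along orbits one has u_1 := z_1^a w_1^b = u + u^2·(ac + bd + ε(z,w)) where ε(0,0) = 0. -/

import Mathlib

/-- Remainder in the expansion `(1+x)^n = 1 + n x + x^2 * G n x`. -/
def stmt17G : ℕ → ℂ → ℂ
  | 0, _ => 0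
  | n + 1, x => (n : ℂ) + stmt17G n x + x * stmt17G n x

lemma stmt17G_key (n : ℕ) (x : ℂ) :
    (1 + x) ^ n = 1 + (n : ℂ) * x + x ^ 2 * stmt17G n x := by
  induction n with
  | zero => simp [stmt17G]
  | succ n ih =>
    rw [pow_succ, ih, stmt17G]
    push_cast
    ring

lemma stmt17G_analytic (n : ℕ) (x : ℂ) : AnalyticAt ℂ (stmt17G n) x := by
  induction n with
  | zero => exact analyticAt_const
  | succ n ih =>
    show AnalyticAt ℂ (fun x => (n : ℂ) + stmt17G n x + x * stmt17G n x) x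
    exact (analyticAt_const.add ih).add ((analyticAt_id).mul ih)

/-- For integers `a ≥ 1`, `b ≥ 0` (so `a + b ≥ 1`) and
`f₁(z,w) = z + z^{a+1}w^b(c + ε₁)`, `f₂(z,w) = w + z^a w^{b+1}(d + ε₂)` with `c, d ≠ 0`
and `ε₁, ε₂` analytic vanishing at the origin, the monomial `u = z^a w^b` transforms as
`u₁ = z₁^a w₁^b = u + u²(ac + bd + ε(z,w))` with `ε` analytic and `ε(0,0) = 0`. -/
theorem stmt17 (a b : ℕ) (ha : 1 ≤ a) (hab : 1 ≤ a + b) (c d : ℂ) (hc : c ≠ 0) (hd : d ≠ 0)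
    (ε₁ ε₂ : ℂ × ℂ → ℂ)
    (hε₁ : AnalyticAt ℂ ε₁ (0, 0)) (hε₂ : AnalyticAt ℂ ε₂ (0, 0))
    (hε₁0 : ε₁ (0, 0) = 0) (hε₂0 : ε₂ (0, 0) = 0) :
    ∃ ε : ℂ × ℂ → ℂ, AnalyticAt ℂ ε (0, 0) ∧ ε (0, 0) = 0 ∧
      ∀ᶠ p : ℂ × ℂ in nhds (0, 0),
        (p.1 + p.1 ^ (a + 1) * p.2 ^ b * (c + ε₁ p)) ^ a *
            (p.2 + p.1 ^ a * p.2 ^ (b + 1) * (d + ε₂ p)) ^ b =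
          p.1 ^ a * p.2 ^ b +
            (p.1 ^ a * p.2 ^ b) ^ 2 * ((a * c + b * d) + ε p) := by
  set u : ℂ × ℂ → ℂ := fun p => p.1 ^ a * p.2 ^ b with hu_def
  set A : ℂ × ℂ → ℂ := fun p => c + ε₁ p with hA_def
  set B : ℂ × ℂ → ℂ := fun p => d + ε₂ p with hB_def
  set Ga : ℂ × ℂ → ℂ := fun p => stmt17G a (u p * A p) with hGa_def
  set Gb : ℂ × ℂ → ℂ := fun p => stmt17G b (u p * B p) with hGb_def
  refine ⟨fun p => (a : ℂ) * ε₁ p + (b : ℂ) * ε₂ p +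
      u p * ((a : ℂ) * (b : ℂ) * A p * B p + (A p) ^ 2 * Ga p + (B p) ^ 2 * Gb p +
        u p * ((a : ℂ) * A p * (B p) ^ 2 * Gb p + (b : ℂ) * B p * (A p) ^ 2 * Ga p) +
        (u p) ^ 2 * (A p) ^ 2 * (B p) ^ 2 * Ga p * Gb p), ?_, ?_, ?_⟩
  · have hu : AnalyticAt ℂ u (0, 0) := (analyticAt_fst.pow a).mul (analyticAt_snd.pow b)
    have hA : AnalyticAt ℂ A (0, 0) := analyticAt_const.add hε₁
    have hB : AnalyticAt ℂ B (0, 0) := analyticAt_const.add hε₂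
    have hGa : AnalyticAt ℂ Ga (0, 0) := (stmt17G_analytic a _).comp (hu.mul hA)
    have hGb : AnalyticAt ℂ Gb (0, 0) := (stmt17G_analytic b _).comp (hu.mul hB)
    exact ((analyticAt_const.mul hε₁).add (analyticAt_const.mul hε₂)).add
      (hu.mul ((((((analyticAt_const.mul hA).mul hB).add
        ((hA.pow 2).mul hGa)).add ((hB.pow 2).mul hGb)).add
        (hu.mul ((((analyticAt_const.mul hA).mul (hB.pow 2)).mul hGb).add
          (((analyticAt_const.mul hB).mul (hA.pow 2)).mul hGa)))).add
        (((((hu.pow 2).mul (hA.pow 2)).mul (hB.pow 2)).mul hGa).mul hGb)))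
  · have hu0 : u 0 = 0 := by
      simp only [hu_def]
      simp [zero_pow (Nat.one_le_iff_ne_zero.mp ha)]
    have h1 : ε₁ 0 = 0 := hε₁0
    have h2 : ε₂ 0 = 0 := hε₂0
    simp [hu0, h1, h2, hε₁0, hε₂0, show u (0, 0) = 0 from hu0]
  · filter_upwards with p
    have hz : p.1 + p.1 ^ (a + 1) * p.2 ^ b * (c + ε₁ p) = p.1 * (1 + u p * A p) := by
      simp only [hu_def, hA_def]; ring
    have hw : p.2 + p.1 ^ a * p.2 ^ (b + 1) * (d + ε₂ p) = p.2 * (1 + u p * B p) := by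
      simp only [hu_def, hB_def]; ring
    rw [hz, hw, mul_pow, mul_pow, stmt17G_key a (u p * A p), stmt17G_key b (u p * B p)]
    simp only [hu_def, hA_def, hB_def, hGa_def, hGb_def]
    ring
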